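/- Let $\alpha_1,\ldots,\alpha_{k-1}$ be distinct elements of a field $F$ with $k \geq 2$, and let $a_1,a_2,a_3 \in F$. The $k\times k$ matrix whose first $k-1$ columns are $(1,\alpha_i,\alpha_i^2,\ldots,\alpha_i^{k-1})^T$ for $i=1,\ldots,k-1$, and whose last column is $(0,\ldots,0,a_1,a_2,a_3)^T$, has determinant $\left(a_1\sum_{1\le i<j\le k-1}\alpha_i\alpha_j - a_2\sum_{i=1}^{k-1}\alpha_i + a_3\right)\prod_{1\le i<j\le k-1}(\alpha_j-\alpha_i)$. -/

import Mathlib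

open Finset Polynomial Matrix

theorem Ioi_castSucc' (n : ℕ) (i : Fin n) : Finset.Ioi (i.castSucc : Fin (n+1)) =
    insert (Fin.last n) ((Ioi i).map Fin.castSuccEmb) := by
  ext j
  simp only [mem_Ioi, mem_insert, mem_map, Fin.lt_iff_val_lt_val, Fin.coe_castSucc,
    Fin.ext_iff, Fin.val_last, Fin.coe_castSuccEmb]
  constructor
  · intro h
    rcases eq_or_lt_of_le (Nat.lt_succ_iff.mp j.isLt) with h2 | h2
    · exact Or.inl h2
    · exact Or.inr ⟨⟨j, h2⟩, h, rfl⟩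
  · rintro (h | ⟨m, hm, hmj⟩)
    · omega
    · have := m.isLt; omega

theorem last_not_mem_map (n : ℕ) (s : Finset (Fin n)) :
    Fin.last n ∉ s.map (Fin.castSuccEmb) := by
  simp only [mem_map, Fin.coe_castSuccEmb]
  rintro ⟨m, _, hm⟩
  have := m.isLt
  simp only [Fin.ext_iff, Fin.coe_castSucc, Fin.val_last] at hm
  omega

theorem prod_Ioi_snoc {M : Type*} [CommMonoid M] (n : ℕ) (g : Fin (n+1) → Fin (n+1) → M) :
    ∏ i, ∏ j ∈ Ioi i, g i j =
      (∏ i : Fin n, ∏ j ∈ Ioi i, g i.castSucc j.castSucc) *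
        ∏ i : Fin n, g i.castSucc (Fin.last n) := by
  rw [Fin.prod_univ_castSucc]
  have hlast : Finset.Ioi (Fin.last n) = ∅ := by
    ext j
    simp only [mem_Ioi, notMem_empty, iff_false, not_lt]
    exact Fin.le_last j
  rw [hlast, Finset.prod_empty, mul_one, ← Finset.prod_mul_distrib]
  congr 1; ext i
  rw [Ioi_castSucc', Finset.prod_insert (last_not_mem_map n _), Finset.prod_map, mul_comm]
  rfl

theorem sum_Ioi_snoc {M : Type*} [AddCommMonoid M] (n : ℕ) (g : Fin (n+1) → Fin (n+1) → M) :
    ∑ i, ∑ j ∈ Ioi i, g i j =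
      (∑ i : Fin n, ∑ j ∈ Ioi i, g i.castSucc j.castSucc) +
        ∑ i : Fin n, g i.castSucc (Fin.last n) := by
  rw [Fin.sum_univ_castSucc]
  have hlast : Finset.Ioi (Fin.last n) = ∅ := by
    ext j
    simp only [mem_Ioi, notMem_empty, iff_false, not_lt]
    exact Fin.le_last j
  rw [hlast, Finset.sum_empty, add_zero, ← Finset.sum_add_distrib]
  congr 1; ext i
  rw [Ioi_castSucc', Finset.sum_insert (last_not_mem_map n _), Finset.sum_map, add_comm]
  rfl

theorem coeff_top {R : Type*} [CommRing R] [Nontrivial R] (n : ℕ) (g : Fin n → R) :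
    (∏ i, (X - C (g i))).coeff n = 1 := by
  have hm : (∏ i, (X - C (g i))).Monic :=
    monic_prod_of_monic _ _ fun i _ => monic_X_sub_C _
  have hd : (∏ i, (X - C (g i))).natDegree = n := by
    rw [natDegree_prod_of_monic _ _ fun i _ => monic_X_sub_C _]
    simp [natDegree_X_sub_C]
  have := hm.coeff_natDegree
  rwa [hd] at this

theorem coeff_sub_one {R : Type*} [CommRing R] [Nontrivial R] (n : ℕ) (g : Fin (n+1) → R) :
    (∏ i, (X - C (g i))).coeff n = -∑ i, g i := by
  induction n with
  | zero => simp [Fin.prod_univ_one, Fin.sum_univ_one, coeff_sub]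
  | succ n ih =>
    rw [Fin.prod_univ_castSucc, coeff_mul_X_sub_C, ih, coeff_top,
      Fin.sum_univ_castSucc (f := g)]
    ring

theorem coeff_sub_two {R : Type*} [CommRing R] [Nontrivial R] (n : ℕ) (g : Fin (n+2) → R) :
    (∏ i, (X - C (g i))).coeff n = ∑ i, ∑ j ∈ Ioi i, g i * g j := by
  induction n with
  | zero =>
    rw [Fin.prod_univ_two]
    have h0 : Finset.Ioi (0 : Fin 2) = {1} := by decide
    have h1 : Finset.Ioi (1 : Fin 2) = ∅ := by decide
    simp [Fin.sum_univ_two, h0, h1, coeff_zero_eq_eval_zero]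
  | succ n ih =>
    rw [Fin.prod_univ_castSucc, coeff_mul_X_sub_C, ih, coeff_sub_one,
      sum_Ioi_snoc (n+2) (fun i j => g i * g j), ← Finset.sum_mul]
    ring

theorem det_updateRow_sum'' {R : Type*} [CommRing R] {m : Type*} [DecidableEq m] [Fintype m]
    (M : Matrix m m R) (j : m) {ι : Type*} (t : Finset ι) (v : ι → m → R) :
    (M.updateRow j (∑ a ∈ t, v a)).det = ∑ a ∈ t, (M.updateRow j (v a)).det := by
  induction t using Finset.cons_induction with
  | empty =>
    simp only [Finset.sum_empty]
    exact Matrix.det_eq_zero_of_row_eq_zero j (by simp)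
  | cons a t ha ih => rw [Finset.sum_cons, Matrix.det_updateRow_add, ih, Finset.sum_cons]


def vcol {R : Type*} [CommRing R] (n : ℕ) (β : Fin n → R) (c : Fin (n+1) → R) :
    Matrix (Fin (n+1)) (Fin (n+1)) R :=
  Matrix.of fun i j => if h : (j : ℕ) < n then β ⟨j, h⟩ ^ (i : ℕ) else c i

theorem det_expand_last {R : Type*} [CommRing R] (n : ℕ) (β : Fin n → R) (c : Fin (n+1) → R) :
    (vcol n β c).det = ∑ s : Fin (n+1), c s * (vcol n β (Pi.single s (1:R))).det := by
  have hup : ∀ x : Fin (n+1) → R,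
      (vcol n β x)ᵀ = ((vcol n β (fun _ => 0))ᵀ).updateRow (Fin.last n) x := by
    intro x
    ext j i
    by_cases hj : j = Fin.last n
    · subst hj
      rw [Matrix.updateRow_self]
      show vcol n β x i (Fin.last n) = x i
      simp only [vcol, Matrix.of_apply, Fin.val_last]
      exact dif_neg (lt_irrefl n)
    · rw [Matrix.updateRow_ne hj]
      have hjn : (j : ℕ) < n := by
        have h2 := j.isLt
        have h3 : (j:ℕ) ≠ n := fun h => hj (Fin.ext (by simp [h, Fin.val_last]))
        omega
      show vcol n β x i j = vcol n β (fun _ => 0) i j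
      simp only [vcol, Matrix.of_apply]
      rw [dif_pos hjn, dif_pos hjn]
  rw [← Matrix.det_transpose, hup c]
  conv_lhs => rw [← Finset.univ_sum_single c]
  rw [det_updateRow_sum'']
  apply Finset.sum_congr rfl
  intro s _
  have h1 : (Pi.single s (c s) : Fin (n+1) → R)
      = c s • (Pi.single s (1:R) : Fin (n+1) → R) := by
    rw [← Pi.single_smul, smul_eq_mul, mul_one]
  rw [h1, Matrix.det_updateRow_smul]
  congr 1
  rw [← Matrix.det_transpose (vcol n β (Pi.single s 1)), hup (Pi.single s (1:R))]

theorem det_single_col {F : Type*} [Field F] (n : ℕ) (α : Fin n → F) (s : Fin (n+1)) :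
    (vcol n α (Pi.single s (1:F))).det =
      ((∏ i, (X - C (α i))).coeff (s:ℕ)) * ∏ i, ∏ j ∈ Ioi i, (α j - α i) := by
  set w : Fin (n+1) → F[X] := fun j => if h : (j:ℕ) < n then C (α ⟨j,h⟩) else X with hw
  have hwc : ∀ i : Fin n, w i.castSucc = C (α i) := by
    intro i
    simp only [hw]
    have h : ((i.castSucc : Fin (n+1)) : ℕ) < n := by
      rw [Fin.coe_castSucc]; exact i.isLt
    rw [dif_pos h]
    exact congrArg (fun t => C (α t)) (Fin.ext (Fin.coe_castSucc i))
  have hwl : w (Fin.last n) = X := by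
    simp only [hw]
    exact dif_neg (by rw [Fin.val_last]; exact lt_irrefl n)
  have hvand : vcol n (fun i => C (α i)) (fun i : Fin (n+1) => (X:F[X]) ^ (i:ℕ))
      = (Matrix.vandermonde w)ᵀ := by
    apply Matrix.ext
    intro i j
    by_cases h : (j:ℕ) < n
    · simp [vcol, Matrix.vandermonde, hw, h]
    · simp [vcol, Matrix.vandermonde, hw, h]
  have hB : (vcol n (fun i => C (α i)) (fun i : Fin (n+1) => (X:F[X]) ^ (i:ℕ))).det
      = C (∏ i, ∏ j ∈ Ioi i, (α j - α i)) * ∏ i, (X - C (α i)) := by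
    rw [hvand, Matrix.det_transpose, Matrix.det_vandermonde,
      prod_Ioi_snoc n (fun i j => w j - w i)]
    simp only [hwc, hwl]
    congr 1
    rw [map_prod]
    apply Finset.prod_congr rfl
    intro i _
    rw [map_prod]
    apply Finset.prod_congr rfl
    intro j _
    rw [map_sub]
  have hmap : ∀ t : Fin (n+1), vcol n (fun i => C (α i)) (Pi.single t (1:F[X]))
      = (vcol n α (Pi.single t (1:F))).map C := by
    intro t
    apply Matrix.ext
    intro i j
    show (if h : (j:ℕ) < n then C (α ⟨j,h⟩) ^ (i:ℕ)
        else (Pi.single t (1:F[X]) : Fin (n+1) → F[X]) i)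
      = C (if h : (j:ℕ) < n then α ⟨j,h⟩ ^ (i:ℕ) else (Pi.single t (1:F) : Fin (n+1) → F) i)
    by_cases h : (j:ℕ) < n
    · rw [dif_pos h, dif_pos h, map_pow]
    · rw [dif_neg h, dif_neg h]
      by_cases hi : i = t
      · subst hi; rw [Pi.single_eq_same, Pi.single_eq_same, Polynomial.C_1]
      · rw [Pi.single_eq_of_ne hi, Pi.single_eq_of_ne hi, map_zero]
  have hexp := det_expand_last n (fun i => C (α i)) (fun i : Fin (n+1) => (X:F[X]) ^ (i:ℕ))
  rw [hB] at hexp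
  have hcoeff := congrArg (fun p : F[X] => p.coeff (s:ℕ)) hexp
  rw [coeff_C_mul, finset_sum_coeff] at hcoeff
  have hterm : ∀ t : Fin (n+1),
      ((X:F[X]) ^ (t:ℕ) * (vcol n (fun i => C (α i)) (Pi.single t (1:F[X]))).det).coeff (s:ℕ)
      = (if (s:ℕ) = (t:ℕ) then 1 else 0) * (vcol n α (Pi.single t (1:F))).det := by
    intro t
    rw [hmap t, ← RingHom.mapMatrix_apply, ← RingHom.map_det, mul_comm, coeff_C_mul,
      coeff_X_pow, mul_comm]
  simp only [hterm] at hcoeff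
  rw [Finset.sum_eq_single s (fun t _ ht => by
      rw [if_neg (fun h => ht (Fin.ext h.symm)), zero_mul])
      (fun h => absurd (Finset.mem_univ s) h), if_pos rfl, one_mul] at hcoeff
  rw [← hcoeff, mul_comm]

theorem stmt5 {F : Type*} [Field F] (k : ℕ) (hk : 2 ≤ k)
    (α : Fin (k - 1) → F) (hα : Function.Injective α) (a₁ a₂ a₃ : F) :
    Matrix.det (Matrix.of fun i j : Fin k =>
      if h : (j : ℕ) < k - 1 then α ⟨j, h⟩ ^ (i : ℕ)
      else if (i : ℕ) + 3 = k then a₁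
      else if (i : ℕ) + 2 = k then a₂
      else if (i : ℕ) + 1 = k then a₃ else 0) =
    (a₁ * (∑ i, ∑ j ∈ Finset.Ioi i, α i * α j) - a₂ * (∑ i, α i) + a₃) *
      ∏ i, ∏ j ∈ Finset.Ioi i, (α j - α i) := by
  obtain ⟨m, rfl⟩ : ∃ m, k = m + 2 := ⟨k - 2, by omega⟩
  cases m with
  | zero =>
    rw [Matrix.det_fin_two]
    have h0 : Finset.Ioi (0 : Fin 1) = ∅ := by decide
    simp [Fin.sum_univ_one, Fin.prod_univ_one, h0]
    ring
  | succ m =>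
    set c : Fin (m+3) → F := fun i =>
      if (i:ℕ) + 3 = m + 3 then a₁
      else if (i:ℕ) + 2 = m + 3 then a₂
      else if (i:ℕ) + 1 = m + 3 then a₃ else 0 with hcdef
    show (vcol (m+2) α c).det =
      (a₁ * (∑ i, ∑ j ∈ Finset.Ioi i, α i * α j) - a₂ * (∑ i, α i) + a₃) *
        ∏ i, ∏ j ∈ Finset.Ioi i, (α j - α i)
    rw [det_expand_last]
    have hds : ∀ s : Fin (m+3), (vcol (m+2) α (Pi.single s (1:F))).det =
        ((∏ i, (X - C (α i))).coeff (s:ℕ)) * ∏ i, ∏ j ∈ Ioi i, (α j - α i) :=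
      fun s => det_single_col (m+2) α s
    simp only [hds]
    set V : F := ∏ i, ∏ j ∈ Ioi i, (α j - α i) with hV
    set P : F[X] := ∏ i, (X - C (α i)) with hP
    have s1 : Fin (m+3) := ⟨m, by omega⟩
    have hc : c = fun s : Fin (m+3) =>
        (if s = (⟨m, by omega⟩ : Fin (m+3)) then a₁ else 0) +
        (if s = (⟨m+1, by omega⟩ : Fin (m+3)) then a₂ else 0) +
        (if s = (⟨m+2, by omega⟩ : Fin (m+3)) then a₃ else 0) := by
      funext s
      have hlt := s.isLt
      simp only [hcdef, Fin.ext_iff]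
      split_ifs <;> first | ring1 | (exfalso; omega)
    rw [hc]
    simp only [add_mul, Finset.sum_add_distrib, ite_mul, zero_mul]
    rw [Finset.sum_ite_eq' univ (⟨m, by omega⟩ : Fin (m+3)),
      Finset.sum_ite_eq' univ (⟨m+1, by omega⟩ : Fin (m+3)),
      Finset.sum_ite_eq' univ (⟨m+2, by omega⟩ : Fin (m+3))]
    simp only [Finset.mem_univ, if_true]
    have e1 : P.coeff ((⟨m, by omega⟩ : Fin (m+3)) : ℕ) = ∑ i, ∑ j ∈ Ioi i, α i * α j := by
      rw [hP]; exact coeff_sub_two m α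
    have e2 : P.coeff ((⟨m+1, by omega⟩ : Fin (m+3)) : ℕ) = -∑ i, α i := by
      rw [hP]; exact coeff_sub_one (m+1) α
    have e3 : P.coeff ((⟨m+2, by omega⟩ : Fin (m+3)) : ℕ) = 1 := by
      rw [hP]; exact coeff_top (m+2) α
    rw [e1, e2, e3]
    ring
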